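/- Let d ≥ 1, let F_q be a finite field of odd characteristic with q elements, and let t ∈ F_q \ {0}. Then the sphere S_t = {x ∈ F_q^d : ‖x‖ = t} satisfies | |S_t| − q^{d−1} | ≤ q^{(d−1)/2}. -/

import Mathlib

open Finset AddChar MulChar

private lemma addChar_map_sum {A M : Type*} [AddCommMonoid A] [CommMonoid M] (ψ : AddChar A M)
    {ι : Type*} (s : Finset ι) (f : ι → A) : ψ (∑ i ∈ s, f i) = ∏ i ∈ s, ψ (f i) := by
  classical
  induction s using Finset.induction with
  | empty => simp
  | insert _ _ h ih => rw [Finset.sum_insert h, Finset.prod_insert h, map_add_eq_mul, ih]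

/-- `normF x = x₁² + ⋯ + x_d²`. -/
def normF {F : Type*} [Field F] {d : ℕ} (x : Fin d → F) : F := ∑ i, x i ^ 2

/-- For `t ≠ 0`, the sphere `S_t = {x ∈ F_q^d : ‖x‖ = t}` has `| |S_t| - q^{d-1} | ≤ q^{(d-1)/2}`. -/
theorem stmt8 (d : ℕ) (hd : 1 ≤ d) (F : Type*) [Field F] [Fintype F]
    (hF : ringChar F ≠ 2) (t : F) (ht : t ≠ 0) :
    |(Set.ncard {x : Fin d → F | normF x = t} : ℝ) - (Fintype.card F : ℝ) ^ (d - 1)| ≤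
      (Fintype.card F : ℝ) ^ (((d : ℝ) - 1) / 2) := by
  classical
  set q : ℕ := Fintype.card F with hq
  have hq1 : 1 < q := Fintype.one_lt_card
  have hqC : (q : ℂ) ≠ 0 := Nat.cast_ne_zero.mpr (by omega)
  -- the characters
  set ψ : AddChar F ℂ := AddChar.FiniteField.primitiveChar_to_Complex F with hψdef
  have hψ : ψ.IsPrimitive := AddChar.FiniteField.primitiveChar_to_Complex_isPrimitive F
  set χ : MulChar F ℂ := (quadraticChar F).ringHomComp (Int.castRingHom ℂ) with hχdef
  have hχ1 : χ ≠ 1 :=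
    (MulChar.ringHomComp_ne_one_iff (RingHom.injective_int _)).mpr (quadraticChar_ne_one hF)
  have hχ2 : χ.IsQuadratic := (quadraticChar_isQuadratic F).comp _
  have hχval : ∀ s : F, χ s = ((quadraticChar F s : ℤ) : ℂ) := fun s => rfl
  have hχsq : ∀ a : F, a ≠ 0 → χ a ^ 2 = 1 := by
    intro a ha
    rw [hχval]
    rw [← Int.cast_pow, quadraticChar_sq_one ha, Int.cast_one]
  have hχzero : χ (0 : F) = 0 := by
    rw [hχval]
    simp [quadraticChar_eq_zero_iff]
  set g : ℂ := gaussSum χ ψ with hgdef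
  have hg2 : g ^ 2 = χ (-1) * q := gaussSum_sq hχ1 hχ2 hψ
  have hχnorm : ∀ a : F, a ≠ 0 → ‖χ a‖ = 1 := by
    intro a ha
    rcases hχ2 a with h | h | h
    · exfalso
      apply ha
      rw [hχval] at h
      have h' : quadraticChar F a = 0 := by exact_mod_cast h
      exact quadraticChar_eq_zero_iff.mp h'
    · rw [h]; simp
    · rw [h]; simp
  have hgnorm : ‖g‖ = Real.sqrt q := by
    have h1 : ‖g‖ ^ 2 = (q : ℝ) := by
      rw [← norm_pow, hg2, norm_mul, hχnorm (-1) (by simp), one_mul]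
      simp
    rw [← h1, Real.sqrt_sq (norm_nonneg g)]
  -- the inner character sum
  have hS : ∀ a : F, ∑ u : F, ψ (a * u ^ 2) = if a = 0 then (q : ℂ) else χ a * g := by
    intro a
    have step1 : ∑ u : F, ψ (a * u ^ 2)
        = ∑ s : F, ((univ.filter (fun u : F => u ^ 2 = s)).card : ℂ) * ψ (a * s) := by
      rw [← Finset.sum_fiberwise_of_maps_to (g := fun u : F => u ^ 2)
        (fun u _ => mem_univ _) (fun u => ψ (a * u ^ 2))]
      refine Finset.sum_congr rfl fun s _ => ?_
      rw [Finset.sum_congr rfl (fun u hu => by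
        rw [(Finset.mem_filter.mp hu).2]), Finset.sum_const, nsmul_eq_mul]
    have hcard : ∀ s : F, ((univ.filter (fun u : F => u ^ 2 = s)).card : ℂ)
        = χ s + 1 := by
      intro s
      have h := quadraticChar_card_sqrts hF s
      have h2 : {x : F | x ^ 2 = s}.toFinset = univ.filter (fun u : F => u ^ 2 = s) := by
        ext u; simp
      rw [h2] at h
      rw [hχval]
      exact_mod_cast congrArg (fun z : ℤ => (z : ℂ)) h
    rw [step1]
    simp_rw [hcard, add_mul, one_mul, Finset.sum_add_distrib]
    have hfirst : ∑ s : F, ψ (a * s) = if a = 0 then (q : ℂ) else 0 := by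
      simp_rw [mul_comm a]
      exact_mod_cast AddChar.sum_mulShift a hψ
    by_cases ha : a = 0
    · rw [ha, if_pos rfl]
      simp only [zero_mul, map_zero_eq_one, mul_one]
      rw [MulChar.sum_eq_zero_of_ne_one hχ1, zero_add]
      rw [ha, if_pos rfl] at hfirst
      simpa using hfirst
    · rw [if_neg ha]
      rw [hfirst, if_neg ha, add_zero]
      have hmul : ∑ s : F, χ s * ψ (a * s) = gaussSum χ (ψ.mulShift a) := by
        simp [gaussSum, AddChar.mulShift_apply]
      rw [hmul]
      have hu := gaussSum_mulShift χ ψ (Units.mk0 a ha)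
      simp only [Units.val_mk0] at hu
      have h2 : χ a * (χ a * gaussSum χ (ψ.mulShift a)) = χ a * gaussSum χ ψ := by rw [hu]
      rw [← mul_assoc, ← sq, hχsq a ha, one_mul] at h2
      rw [h2]
  -- counting
  set N : ℕ := (univ.filter (fun x : Fin d → F => normF x = t)).card with hN
  have hncard : {x : Fin d → F | normF x = t}.ncard = N := by
    rw [hN, Set.ncard_eq_toFinset_card']
    congr 1
    ext x; simp
  -- main identity
  set E : ℂ := ∑ a ∈ univ.erase (0 : F), χ a ^ d * ψ (-(a * t)) with hE
  have main : (q : ℂ) * N = (q : ℂ) ^ d + g ^ d * E := by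
    have lhs : ∑ x : Fin d → F, ∑ a : F, ψ (a * (normF x - t)) = (q : ℂ) * N := by
      have inner : ∀ x : Fin d → F, ∑ a : F, ψ (a * (normF x - t))
          = if normF x = t then (q : ℂ) else 0 := by
        intro x
        have h3 := AddChar.sum_mulShift (normF x - t) hψ
        rw [show ((normF x - t = 0) ↔ (normF x = t)) from sub_eq_zero] at h3
        exact_mod_cast h3
      simp_rw [inner]
      rw [Finset.sum_ite, Finset.sum_const, Finset.sum_const_zero, add_zero, nsmul_eq_mul]
      rw [mul_comm]
    have rhs : ∑ x : Fin d → F, ∑ a : F, ψ (a * (normF x - t))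
        = (q : ℂ) ^ d + g ^ d * E := by
      rw [Finset.sum_comm]
      have step : ∀ a : F, ∑ x : Fin d → F, ψ (a * (normF x - t))
          = (∑ u : F, ψ (a * u ^ 2)) ^ d * ψ (-(a * t)) := by
        intro a
        have hsplit : ∀ x : Fin d → F, ψ (a * (normF x - t))
            = (∏ i, ψ (a * x i ^ 2)) * ψ (-(a * t)) := by
          intro x
          rw [mul_sub, sub_eq_add_neg, map_add_eq_mul]
          congr 1
          rw [normF, Finset.mul_sum, addChar_map_sum]
        simp_rw [hsplit, ← Finset.sum_mul]
        congr 1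
        rw [show (∑ u : F, ψ (a * u ^ 2)) ^ d = ∏ _i : Fin d, ∑ u : F, ψ (a * u ^ 2) from by
          simp [Finset.prod_const], Finset.prod_univ_sum, Fintype.piFinset_univ]
      simp_rw [step]
      rw [← Finset.add_sum_erase _ _ (mem_univ (0 : F))]
      congr 1
      · rw [hS 0, if_pos rfl]
        simp
      · rw [hE, Finset.mul_sum]
        refine Finset.sum_congr rfl fun a ha => ?_
        have ha0 : a ≠ 0 := Finset.ne_of_mem_erase ha
        rw [hS a, if_neg ha0, mul_pow]
        ring
    rw [← lhs, rhs]
  -- extract N - q^(d-1)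
  have key : (N : ℂ) - (q : ℂ) ^ (d - 1) = g ^ d * E / q := by
    have hqd : (q : ℂ) ^ d = (q : ℂ) * (q : ℂ) ^ (d - 1) := by
      conv_lhs => rw [show d = (d - 1) + 1 by omega]
      rw [pow_succ]; ring
    field_simp
    linear_combination main + hqd
  -- norm bound for E
  have hEnorm : ‖E‖ ≤ Real.sqrt q := by
    rcases Nat.even_or_odd d with hpar | hpar
    · -- even: χ a ^ d = 1
      have hE1 : E = ∑ a ∈ univ.erase (0 : F), ψ (-(a * t)) := by
        refine Finset.sum_congr rfl fun a ha => ?_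
        obtain ⟨k, hk⟩ := hpar
        rw [hk, ← two_mul, pow_mul, hχsq a (Finset.ne_of_mem_erase ha), one_pow, one_mul]
      have htot : ∑ a : F, ψ (-(a * t)) = 0 := by
        have := AddChar.sum_mulShift (-t) hψ
        rw [if_neg (neg_ne_zero.mpr ht)] at this
        simp_rw [show ∀ a : F, -(a * t) = a * -t by intro a; ring]
        exact_mod_cast this
      have : E = -1 := by
        have h := Finset.add_sum_erase univ (fun a : F => ψ (-(a * t))) (mem_univ 0)
        rw [htot] at h
        have : ψ (-(0 * t)) = 1 := by simp
        rw [hE1]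
        linear_combination h - this
      rw [this, norm_neg, norm_one]
      rw [show (1 : ℝ) = Real.sqrt 1 by simp]
      exact Real.sqrt_le_sqrt (by exact_mod_cast hq1.le)
    · -- odd: χ a ^ d = χ a
      have hE1 : E = ∑ a ∈ univ.erase (0 : F), χ a * ψ (-(a * t)) := by
        refine Finset.sum_congr rfl fun a ha => ?_
        obtain ⟨k, hk⟩ := hpar
        rw [hk, pow_succ, pow_mul, hχsq a (Finset.ne_of_mem_erase ha), one_pow, one_mul]
      have hE2 : E = gaussSum χ (ψ.mulShift (-t)) := by
        rw [hE1, gaussSum]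
        rw [← Finset.add_sum_erase _ (fun a : F => χ a * (ψ.mulShift (-t)) a) (mem_univ (0:F))]
        rw [hχzero, zero_mul, zero_add]
        refine Finset.sum_congr rfl fun a _ => ?_
        rw [AddChar.mulShift_apply]
        ring_nf
      have hgs : χ (-t) * gaussSum χ (ψ.mulShift (-t)) = g := by
        have := gaussSum_mulShift χ ψ (Units.mk0 (-t) (neg_ne_zero.mpr ht))
        exact this
      have : ‖χ (-t)‖ * ‖gaussSum χ (ψ.mulShift (-t))‖ = ‖g‖ := by
        rw [← norm_mul, hgs]
      rw [hχnorm (-t) (neg_ne_zero.mpr ht), one_mul] at this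
      rw [hE2, this, hgnorm]
  -- final bound
  have hQ0 : (0 : ℝ) < (q : ℝ) := by
    have : 0 < q := by omega
    exact_mod_cast this
  have habs : |(N : ℝ) - (q : ℝ) ^ (d - 1)| = ‖g ^ d * E‖ / q := by
    have h1 : ‖(N : ℂ) - (q : ℂ) ^ (d - 1)‖ = ‖g ^ d * E‖ / (q : ℝ) := by
      rw [key, norm_div]
      congr 1
      simp
    rw [← h1, show ((N : ℂ) - (q : ℂ) ^ (d - 1)) = (((N : ℝ) - (q : ℝ) ^ (d - 1) : ℝ) : ℂ) by
      push_cast; ring]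
    rw [Complex.norm_real, Real.norm_eq_abs]
  rw [hncard, habs]
  have hb : ‖g ^ d * E‖ ≤ Real.sqrt q ^ d * Real.sqrt q := by
    rw [norm_mul, norm_pow, hgnorm]
    exact mul_le_mul_of_nonneg_left hEnorm (by positivity)
  have hsq : Real.sqrt q = (q : ℝ) ^ ((1 : ℝ) / 2) := Real.sqrt_eq_rpow (q : ℝ)
  calc ‖g ^ d * E‖ / q ≤ (Real.sqrt q ^ d * Real.sqrt q) / q := by
        exact div_le_div_of_nonneg_right hb hQ0.le
    _ = (q : ℝ) ^ ((1 : ℝ)/2 * d + 1/2) / (q : ℝ) ^ (1 : ℝ) := by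
        rw [hsq, ← Real.rpow_natCast ((q : ℝ) ^ ((1 : ℝ)/2)) d, ← Real.rpow_mul hQ0.le,
          ← Real.rpow_add hQ0, Real.rpow_one]
    _ = (q : ℝ) ^ (((d : ℝ) - 1) / 2) := by
        rw [← Real.rpow_sub hQ0]
        congr 1
        ring
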